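/- arXiv:2304.10932 — 2 statements merged into one kernel-verified Lean document; each statement's English description precedes it below -/
import Mathlib

section
/- Under the hypotheses of the previous statement, the derivative of the implicit function g with respect to the j-th coordinate at the base point (ψ̄_k)_{k∈𝒥} equals η_j = σ_j^p (b_j(ψ̄ - ψ̄_j))^{p-1} / Σ_{k∈𝒥} σ_k^p (b_k(ψ̄ - ψ̄_k))^{p-1}, with p - 1 = -0.46. -/
open Finset

theorem stmt_5 (J : Type) [Fintype J] [Nonempty J] [DecidableEq J]
    (σ b : J → ℝ) (hσ : ∀ j, 0 < σ j) (hb : ∀ j, b j = 1 ∨ b j = -1) (c : ℝ)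
    (ψbar : ℝ) (ψbarJ : J → ℝ) (hpos : ∀ j, 0 < b j * (ψbar - ψbarJ j))
    (U : Set (J → ℝ)) (hU : IsOpen U) (hmem : ψbarJ ∈ U)
    (g : (J → ℝ) → ℝ) (hg : DifferentiableAt ℝ g ψbarJ) (hgbase : g ψbarJ = ψbar)
    (himp : ∀ ψJ ∈ U,
      ∑ j, b j * (σ j) ^ (0.54 : ℝ) * (b j * (g ψJ - ψJ j)) ^ (0.54 : ℝ) = c) (j : J) :
    fderiv ℝ g ψbarJ (Pi.single j 1) =
      (σ j) ^ (0.54 : ℝ) * (b j * (ψbar - ψbarJ j)) ^ ((0.54 : ℝ) - 1) /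
        ∑ k, (σ k) ^ (0.54 : ℝ) * (b k * (ψbar - ψbarJ k)) ^ ((0.54 : ℝ) - 1) := by
  set p : ℝ := 0.54 with hp
  have hG := hg.hasFDerivAt
  set G := fderiv ℝ g ψbarJ with hGdef
  have hbsq : ∀ k, b k * b k = 1 := by
    intro k; rcases hb k with h | h <;> rw [h] <;> norm_num
  have hterm : ∀ k : J, HasFDerivAt
      (fun ψJ : J → ℝ => b k * σ k ^ p * (b k * (g ψJ - ψJ k)) ^ p)
      ((b k * σ k ^ p * (p * (b k * (ψbar - ψbarJ k)) ^ (p - 1)) * b k) •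
        (G - ContinuousLinearMap.proj k)) ψbarJ := by
    intro k
    have h1 : HasFDerivAt (fun ψJ : J → ℝ => g ψJ - ψJ k)
        (G - ContinuousLinearMap.proj k) ψbarJ :=
      hG.sub ((ContinuousLinearMap.proj (R := ℝ) (φ := fun _ : J => ℝ) k).hasFDerivAt)
    have hinner : HasFDerivAt (fun ψJ : J → ℝ => b k * (g ψJ - ψJ k))
        ((b k) • (G - ContinuousLinearMap.proj k)) ψbarJ := h1.const_mul (b k)
    have hrpow : HasDerivAt (fun x : ℝ => x ^ p)
        (p * (b k * (ψbar - ψbarJ k)) ^ (p - 1)) (b k * (g ψbarJ - ψbarJ k)) := by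
      rw [hgbase]
      simpa using Real.hasDerivAt_rpow_const (p := p)
        (Or.inl (ne_of_gt (hpos k)))
    have hcomp := hrpow.comp_hasFDerivAt ψbarJ hinner
    have := hcomp.const_mul (b k * σ k ^ p)
    refine this.congr_fderiv ?_
    ext v
    simp [mul_comm, mul_assoc, mul_left_comm]
  have hsum : HasFDerivAt
      (fun ψJ : J → ℝ => ∑ k, b k * σ k ^ p * (b k * (g ψJ - ψJ k)) ^ p)
      (∑ k, (b k * σ k ^ p * (p * (b k * (ψbar - ψbarJ k)) ^ (p - 1)) * b k) •
        (G - ContinuousLinearMap.proj k)) ψbarJ :=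
    HasFDerivAt.fun_sum (fun k _ => hterm k)
  -- the sum function is locally constant
  have hloc : (fun ψJ : J → ℝ => ∑ k, b k * σ k ^ p * (b k * (g ψJ - ψJ k)) ^ p)
      =ᶠ[nhds ψbarJ] fun _ => c := by
    filter_upwards [hU.mem_nhds hmem] with x hx using himp x hx
  have hzero : (∑ k, (b k * σ k ^ p * (p * (b k * (ψbar - ψbarJ k)) ^ (p - 1)) * b k) •
      (G - ContinuousLinearMap.proj k) : (J → ℝ) →L[ℝ] ℝ) = 0 := by
    rw [← hsum.fderiv, hloc.fderiv_eq]
    exact fderiv_const_apply c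
  have hzj := ContinuousLinearMap.ext_iff.mp hzero (Pi.single j (1:ℝ))
  simp only [ContinuousLinearMap.coe_sum', Finset.sum_apply,
    ContinuousLinearMap.coe_smul', Pi.smul_apply, ContinuousLinearMap.sub_apply,
    ContinuousLinearMap.proj_apply, ContinuousLinearMap.zero_apply,
    smul_eq_mul] at hzj
  set D := G (Pi.single j 1) with hD
  have heval : ∀ k, (Pi.single j (1:ℝ) : J → ℝ) k = if k = j then 1 else 0 := by
    intro k; by_cases h : k = j <;> simp [h, Pi.single_apply]
  have key : ∀ k, (b k * σ k ^ p * (p * (b k * (ψbar - ψbarJ k)) ^ (p - 1)) * b k) *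
      (D - (Pi.single j (1:ℝ) : J → ℝ) k)
      = p * (σ k ^ p * (b k * (ψbar - ψbarJ k)) ^ (p - 1) * D)
        - (if k = j then p * (σ k ^ p * (b k * (ψbar - ψbarJ k)) ^ (p - 1)) else 0) := by
    intro k
    rw [heval k]
    have : b k * σ k ^ p * (p * (b k * (ψbar - ψbarJ k)) ^ (p - 1)) * b k
        = p * (σ k ^ p * (b k * (ψbar - ψbarJ k)) ^ (p - 1)) := by
      have h := hbsq k
      linear_combination (σ k ^ p * (p * (b k * (ψbar - ψbarJ k)) ^ (p - 1))) * h
    rw [this]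
    by_cases h : k = j <;> simp [h] <;> ring
  rw [Finset.sum_congr rfl (fun k _ => key k)] at hzj
  rw [Finset.sum_sub_distrib, Finset.sum_ite_eq' Finset.univ j] at hzj
  simp only [Finset.mem_univ, if_true] at hzj
  have hS : (0:ℝ) < ∑ k, σ k ^ p * (b k * (ψbar - ψbarJ k)) ^ (p - 1) := by
    apply Finset.sum_pos
    · intro k _
      exact mul_pos (Real.rpow_pos_of_pos (hσ k) p)
        (Real.rpow_pos_of_pos (hpos k) (p - 1))
    · exact Finset.univ_nonempty
  have hpne : p ≠ 0 := by norm_num [hp]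
  rw [← Finset.mul_sum, ← Finset.sum_mul] at hzj
  have hDeq : D * (∑ k, σ k ^ p * (b k * (ψbar - ψbarJ k)) ^ (p - 1))
      = σ j ^ p * (b j * (ψbar - ψbarJ j)) ^ (p - 1) := by
    have := sub_eq_zero.mp hzj
    have h3 : (∑ k, σ k ^ p * (b k * (ψbar - ψbarJ k)) ^ (p - 1)) * D
        = σ j ^ p * (b j * (ψbar - ψbarJ j)) ^ (p - 1) :=
      mul_left_cancel₀ hpne (by linarith [this])
    linarith [h3, mul_comm D (∑ k, σ k ^ p * (b k * (ψbar - ψbarJ k)) ^ (p - 1))]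
  rw [eq_div_iff (ne_of_gt hS)]
  exact hDeq
end

section
/- Let p = 0.54, 𝒥 finite nonempty, σ_j > 0, b_j ∈ {-1,1}, and base points ψ̄, (ψ̄_j)_{j∈𝒥} with b_j(ψ̄ - ψ̄_j) > 0 satisfying the balance equation Σ_j b_j σ_j^p (b_j(ψ̄ - ψ̄_j))^p = c. Define the linearization T(ψ_J) = ψ̄ + Σ_j η_j (ψ_j - ψ̄_j) with η_j the normalized weights from Proposition 1. Then T is the first-order Taylor polynomial of the implicit function g at (ψ̄_j)_{j∈𝒥}: g((ψ̄_j)) = T((ψ̄_j)) and Dg((ψ̄_j)) = DT, and hence g(ψ_J) - T(ψ_J) = o(‖ψ_J - ψ̄_J‖) as ψ_J → ψ̄_J. -/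
open Finset Asymptotics

theorem stmt_16 (J : Type) [Fintype J] [Nonempty J] [DecidableEq J]
    (σ b : J → ℝ) (hσ : ∀ j, 0 < σ j) (hb : ∀ j, b j = 1 ∨ b j = -1) (c : ℝ)
    (ψbar : ℝ) (ψbarJ : J → ℝ) (hpos : ∀ j, 0 < b j * (ψbar - ψbarJ j))
    (hbal : ∑ j, b j * (σ j) ^ (0.54 : ℝ) * (b j * (ψbar - ψbarJ j)) ^ (0.54 : ℝ) = c)
    (U : Set (J → ℝ)) (hU : IsOpen U) (hmem : ψbarJ ∈ U)
    (g : (J → ℝ) → ℝ) (hg : DifferentiableAt ℝ g ψbarJ) (hgbase : g ψbarJ = ψbar)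
    (himp : ∀ ψJ ∈ U,
      ∑ j, b j * (σ j) ^ (0.54 : ℝ) * (b j * (g ψJ - ψJ j)) ^ (0.54 : ℝ) = c)
    (η : J → ℝ)
    (hη : ∀ j, η j = (σ j) ^ (0.54 : ℝ) * (b j * (ψbar - ψbarJ j)) ^ ((0.54 : ℝ) - 1) /
      ∑ k, (σ k) ^ (0.54 : ℝ) * (b k * (ψbar - ψbarJ k)) ^ ((0.54 : ℝ) - 1))
    (T : (J → ℝ) → ℝ)
    (hT : ∀ ψJ, T ψJ = ψbar + ∑ j, η j * (ψJ j - ψbarJ j)) :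
    g ψbarJ = T ψbarJ ∧
    fderiv ℝ g ψbarJ = fderiv ℝ T ψbarJ ∧
    (fun ψJ => g ψJ - T ψJ) =o[nhds ψbarJ] fun ψJ => ψJ - ψbarJ := by
  set p : ℝ := 0.54 with hpdef
  have hp0 : p ≠ 0 := by norm_num [hpdef]
  set A : J → ℝ := fun j => b j * (ψbar - ψbarJ j) with hAdef
  set w : J → ℝ := fun j => (σ j) ^ p * (A j) ^ (p - 1) with hwdef
  have hw : ∀ j, 0 < w j := fun j =>
    mul_pos (Real.rpow_pos_of_pos (hσ j) p) (Real.rpow_pos_of_pos (hpos j) (p - 1))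
  set S : ℝ := ∑ k, w k with hSdef
  have hS : 0 < S := Finset.sum_pos (fun j _ => hw j) Finset.univ_nonempty
  -- the candidate derivative
  set L : (J → ℝ) →L[ℝ] ℝ := ∑ j, η j • ContinuousLinearMap.proj j with hLdef
  have hLap : ∀ v : J → ℝ, L v = ∑ j, η j * v j := by
    intro v
    simp [hLdef, ContinuousLinearMap.sum_apply]
  -- fderiv of T
  have hTL : HasFDerivAt T L ψbarJ := by
    have : T = fun ψ => (ψbar - ∑ j, η j * ψbarJ j) + L ψ := by
      funext ψ
      rw [hT, hLap]
      simp only [mul_sub, Finset.sum_sub_distrib]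
      ring
    rw [this]
    exact (L.hasFDerivAt).const_add _
  -- fderiv of g
  set D : (J → ℝ) →L[ℝ] ℝ := fderiv ℝ g ψbarJ with hDdef
  have hgD : HasFDerivAt g D ψbarJ := hg.hasFDerivAt
  -- the balance function
  set F : (J → ℝ) → ℝ := fun ψ => ∑ j, b j * (σ j) ^ p * (b j * (g ψ - ψ j)) ^ p with hFdef
  have hFc : F =ᶠ[nhds ψbarJ] fun _ => c := by
    filter_upwards [hU.mem_nhds hmem] with ψ hψ
    exact himp ψ hψ
  have hterm : ∀ j : J, HasFDerivAt (fun ψ => b j * (σ j) ^ p * (b j * (g ψ - ψ j)) ^ p)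
      ((b j * (σ j) ^ p) • ((p * A j ^ (p - 1)) • (b j • (D - ContinuousLinearMap.proj j)))) ψbarJ := by
    intro j
    have hinner : HasFDerivAt (fun ψ : J → ℝ => b j * (g ψ - ψ j))
        (b j • (D - ContinuousLinearMap.proj j)) ψbarJ := by
      have := (hgD.sub ((ContinuousLinearMap.proj j (R := ℝ) (φ := fun _ : J => ℝ)).hasFDerivAt (x := ψbarJ))).const_mul (b j)
      simpa [smul_sub] using this
    have hval : b j * (g ψbarJ - ψbarJ j) = A j := by rw [hgbase]
    have houter : HasDerivAt (fun x : ℝ => x ^ p) (p * A j ^ (p - 1)) (b j * (g ψbarJ - ψbarJ j)) := by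
      rw [hval]
      exact Real.hasDerivAt_rpow_const (Or.inl (ne_of_gt (hpos j)))
    have := (houter.comp_hasFDerivAt ψbarJ hinner).const_mul (b j * (σ j) ^ p)
    simpa [Function.comp] using this
  have hFD : HasFDerivAt F (∑ j, (b j * (σ j) ^ p) • ((p * A j ^ (p - 1)) • (b j • (D - ContinuousLinearMap.proj j)))) ψbarJ :=
    HasFDerivAt.fun_sum (fun j _ => hterm j)
  have hzero : (∑ j, (b j * (σ j) ^ p) • ((p * A j ^ (p - 1)) • (b j • (D - ContinuousLinearMap.proj j)))) = 0 := by
    rw [← hFD.fderiv, hFc.fderiv_eq, fderiv_fun_const]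
    rfl
  -- evaluate at v
  have hDv : ∀ v : J → ℝ, D v = L v := by
    intro v
    have h1 : ∑ j, b j * (σ j) ^ p * (p * A j ^ (p - 1) * (b j * (D v - v j))) = 0 := by
      have := congrArg (fun (M : (J → ℝ) →L[ℝ] ℝ) => M v) hzero
      simpa [ContinuousLinearMap.sum_apply] using this
    have h2 : ∀ j, b j * (σ j) ^ p * (p * A j ^ (p - 1) * (b j * (D v - v j)))
        = p * (w j * (D v - v j)) := by
      intro j
      have hb2 : b j * b j = 1 := by rcases hb j with h | h <;> rw [h] <;> norm_num
      simp only [hwdef]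
      rcases hb j with h | h <;> rw [h] <;> ring
    rw [Finset.sum_congr rfl (fun j _ => h2 j)] at h1
    rw [← Finset.mul_sum] at h1
    have h3 : ∑ j, w j * (D v - v j) = 0 := by
      rcases mul_eq_zero.mp h1 with h | h
      · exact absurd h hp0
      · exact h
    have h4 : S * D v = ∑ j, w j * v j := by
      have := h3
      rw [Finset.sum_congr rfl (fun j _ => mul_sub (w j) (D v) (v j)), Finset.sum_sub_distrib,
        sub_eq_zero, ← Finset.sum_mul] at this
      exact this
    rw [hLap]
    have h5 : ∑ j, η j * v j = (∑ j, w j * v j) / S := by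
      rw [Finset.sum_div]
      apply Finset.sum_congr rfl
      intro j _
      rw [hη j]
      field_simp
      simp only [hwdef, hAdef]
      ring
    rw [h5, ← h4, mul_comm, mul_div_assoc, div_self (ne_of_gt hS), mul_one]
  have hDL : D = L := ContinuousLinearMap.ext hDv
  have hgL : HasFDerivAt g L ψbarJ := hDL ▸ hgD
  refine ⟨?_, ?_, ?_⟩
  · rw [hT, hgbase]
    simp
  · rw [hDL, hTL.fderiv]
  · have ho := hgL.isLittleO
    have heq : (fun ψJ => g ψJ - T ψJ) = fun ψJ => g ψJ - g ψbarJ - L (ψJ - ψbarJ) := by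
      funext ψ
      rw [hT, hgbase]
      have : L (ψ - ψbarJ) = ∑ j, η j * (ψ j - ψbarJ j) := by
        rw [hLap]
        apply Finset.sum_congr rfl
        intro j _
        rfl
      rw [this]
      ring
    rw [heq]
    exact ho
end
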